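/- For all parameters a,b,c,d, each a natural number or the symbol ∅, and all n ≥ 1, the polynomial R_n^{(a,b,c,d)}(x) satisfies R_n^{(a,b,c,d)}(x) = R_n^{(d,a,b,c)}(x) = R_n^{(c,b,a,d)}(x) = R_n^{(b,a,d,c)}(x) = R_n^{(d,c,b,a)}(x) = R_n^{(a,d,c,b)}(x) = R_n^{(c,d,a,b)}(x) = R_n^{(b,c,d,a)}(x). -/

import Mathlib

/-- A parameter of a simple marked mesh pattern is either a natural number
(`some a`, meaning "at least `a` points") or the symbol ∅ (`none`, meaning
"exactly 0 points").  `pcond p m` says that a quadrant containing `m` points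
satisfies the parameter `p`. -/
def pcond : Option ℕ → ℕ → Prop
  | some a, m => a ≤ m
  | none, m => m = 0

instance (p : Option ℕ) (m : ℕ) : Decidable (pcond p m) := by
  cases p with
  | none => exact inferInstanceAs (Decidable (m = 0))
  | some a => exact inferInstanceAs (Decidable (a ≤ m))

/-- Number of points in quadrant I relative to `(i, σ i)`. -/
def quad1 {n : ℕ} (σ : Equiv.Perm (Fin n)) (i : Fin n) : ℕ :=
  (Finset.univ.filter (fun j => i < j ∧ σ i < σ j)).card

/-- Number of points in quadrant II relative to `(i, σ i)`. -/
def quad2 {n : ℕ} (σ : Equiv.Perm (Fin n)) (i : Fin n) : ℕ :=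
  (Finset.univ.filter (fun j => j < i ∧ σ i < σ j)).card

/-- Number of points in quadrant III relative to `(i, σ i)`. -/
def quad3 {n : ℕ} (σ : Equiv.Perm (Fin n)) (i : Fin n) : ℕ :=
  (Finset.univ.filter (fun j => j < i ∧ σ j < σ i)).card

/-- Number of points in quadrant IV relative to `(i, σ i)`. -/
def quad4 {n : ℕ} (σ : Equiv.Perm (Fin n)) (i : Fin n) : ℕ :=
  (Finset.univ.filter (fun j => i < j ∧ σ j < σ i)).card

/-- `mmp^{(a,b,c,d)}(σ)`: the number of indices `i` such that `σ i` matches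
the simple marked mesh pattern `MMP(a,b,c,d)` in `σ`. -/
def mmp {n : ℕ} (a b c d : Option ℕ) (σ : Equiv.Perm (Fin n)) : ℕ :=
  (Finset.univ.filter (fun i =>
    pcond a (quad1 σ i) ∧ pcond b (quad2 σ i) ∧
    pcond c (quad3 σ i) ∧ pcond d (quad4 σ i))).card

/-- `R_n^{(a,b,c,d)}(x) = Σ_{σ ∈ S_n} x^{mmp^{(a,b,c,d)}(σ)}`. -/
noncomputable def R (a b c d : Option ℕ) (n : ℕ) : Polynomial ℤ :=
  ∑ σ : Equiv.Perm (Fin n), Polynomial.X ^ mmp a b c d σ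

lemma card_filter_equiv {α : Type*} [Fintype α] [DecidableEq α] (e : α ≃ α) (p : α → Prop)
    [DecidablePred p] :
    (Finset.univ.filter fun x => p (e x)).card = (Finset.univ.filter p).card := by
  apply Finset.card_bij (fun x _ => e x)
  · intro x hx; simp_all
  · intro x hx y hy h; exact e.injective h
  · intro y hy
    refine ⟨e.symm y, ?_, by simp⟩
    simp_all

lemma rev_lt_iff {n : ℕ} {i j : Fin n} : i < j.rev ↔ j < i.rev := by
  constructor
  · intro h; have := Fin.rev_lt_rev.mpr h; simpa using this
  · intro h; have := Fin.rev_lt_rev.mpr h; simpa using this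

def revP (n : ℕ) : Equiv.Perm (Fin n) := ⟨Fin.rev, Fin.rev, Fin.rev_rev, Fin.rev_rev⟩

@[simp] lemma revP_apply {n : ℕ} (j : Fin n) : revP n j = j.rev := rfl

section lemmas
variable {n : ℕ} (σ : Equiv.Perm (Fin n)) (i : Fin n)

-- reverse: (σ * revP n) j = σ j.rev
lemma quad1_mul_rev : quad1 (σ * revP n) i = quad2 σ i.rev := by
  unfold quad1 quad2
  rw [← card_filter_equiv (revP n) (p := fun j => j < i.rev ∧ σ i.rev < σ j)]
  congr 1; ext j
  rw [Finset.mem_filter, Finset.mem_filter]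
  simp only [Finset.mem_filter, Finset.mem_univ, true_and, Equiv.Perm.mul_apply, revP_apply]
  rw [rev_lt_iff]; simp [Fin.rev_rev]

lemma quad2_mul_rev : quad2 (σ * revP n) i = quad1 σ i.rev := by
  unfold quad1 quad2
  rw [← card_filter_equiv (revP n) (p := fun j => i.rev < j ∧ σ i.rev < σ j)]
  congr 1; ext j
  rw [Finset.mem_filter, Finset.mem_filter]
  simp only [Finset.mem_filter, Finset.mem_univ, true_and, Equiv.Perm.mul_apply, revP_apply]
  rw [show (j < i) ↔ (i.rev < j.rev) from by rw [rev_lt_iff]; simp]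

lemma quad3_mul_rev : quad3 (σ * revP n) i = quad4 σ i.rev := by
  unfold quad3 quad4
  rw [← card_filter_equiv (revP n) (p := fun j => i.rev < j ∧ σ j < σ i.rev)]
  congr 1; ext j
  rw [Finset.mem_filter, Finset.mem_filter]
  simp only [Finset.mem_filter, Finset.mem_univ, true_and, Equiv.Perm.mul_apply, revP_apply]
  rw [show (j < i) ↔ (i.rev < j.rev) from by rw [rev_lt_iff]; simp]

lemma quad4_mul_rev : quad4 (σ * revP n) i = quad3 σ i.rev := by
  unfold quad3 quad4
  rw [← card_filter_equiv (revP n) (p := fun j => j < i.rev ∧ σ j < σ i.rev)]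
  congr 1; ext j
  rw [Finset.mem_filter, Finset.mem_filter]
  simp only [Finset.mem_filter, Finset.mem_univ, true_and, Equiv.Perm.mul_apply, revP_apply]
  rw [rev_lt_iff]; simp [Fin.rev_rev]

-- complement: (revP n * σ) j = (σ j).rev
lemma quad1_rev_mul : quad1 (revP n * σ) i = quad4 σ i := by
  unfold quad1 quad4
  congr 1; ext j
  rw [Finset.mem_filter, Finset.mem_filter]
  simp only [Finset.mem_filter, Finset.mem_univ, true_and, Equiv.Perm.mul_apply, revP_apply]
  rw [Fin.rev_lt_rev]

lemma quad2_rev_mul : quad2 (revP n * σ) i = quad3 σ i := by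
  unfold quad2 quad3
  congr 1; ext j
  rw [Finset.mem_filter, Finset.mem_filter]
  simp only [Finset.mem_filter, Finset.mem_univ, true_and, Equiv.Perm.mul_apply, revP_apply]
  rw [Fin.rev_lt_rev]

lemma quad3_rev_mul : quad3 (revP n * σ) i = quad2 σ i := by
  unfold quad2 quad3
  congr 1; ext j
  rw [Finset.mem_filter, Finset.mem_filter]
  simp only [Finset.mem_filter, Finset.mem_univ, true_and, Equiv.Perm.mul_apply, revP_apply]
  rw [Fin.rev_lt_rev]

lemma quad4_rev_mul : quad4 (revP n * σ) i = quad1 σ i := by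
  unfold quad1 quad4
  congr 1; ext j
  rw [Finset.mem_filter, Finset.mem_filter]
  simp only [Finset.mem_filter, Finset.mem_univ, true_and, Equiv.Perm.mul_apply, revP_apply]
  rw [Fin.rev_lt_rev]

-- inverse
lemma quad1_inv : quad1 σ⁻¹ i = quad1 σ (σ⁻¹ i) := by
  unfold quad1
  rw [← card_filter_equiv σ⁻¹ (p := fun j => σ⁻¹ i < j ∧ σ (σ⁻¹ i) < σ j)]
  congr 1; ext j
  rw [Finset.mem_filter, Finset.mem_filter]
  simp only [Finset.mem_filter, Finset.mem_univ, true_and, Equiv.Perm.coe_inv, Equiv.symm_apply_apply,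
    Equiv.apply_symm_apply]
  tauto

lemma quad2_inv : quad2 σ⁻¹ i = quad4 σ (σ⁻¹ i) := by
  unfold quad2 quad4
  rw [← card_filter_equiv σ⁻¹ (p := fun j => σ⁻¹ i < j ∧ σ j < σ (σ⁻¹ i))]
  congr 1; ext j
  rw [Finset.mem_filter, Finset.mem_filter]
  simp only [Finset.mem_filter, Finset.mem_univ, true_and, Equiv.Perm.coe_inv, Equiv.symm_apply_apply,
    Equiv.apply_symm_apply]
  tauto

lemma quad3_inv : quad3 σ⁻¹ i = quad3 σ (σ⁻¹ i) := by
  unfold quad3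
  rw [← card_filter_equiv σ⁻¹ (p := fun j => j < σ⁻¹ i ∧ σ j < σ (σ⁻¹ i))]
  congr 1; ext j
  rw [Finset.mem_filter, Finset.mem_filter]
  simp only [Finset.mem_filter, Finset.mem_univ, true_and, Equiv.Perm.coe_inv, Equiv.symm_apply_apply,
    Equiv.apply_symm_apply]
  tauto

lemma quad4_inv : quad4 σ⁻¹ i = quad2 σ (σ⁻¹ i) := by
  unfold quad2 quad4
  rw [← card_filter_equiv σ⁻¹ (p := fun j => j < σ⁻¹ i ∧ σ (σ⁻¹ i) < σ j)]
  congr 1; ext j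
  rw [Finset.mem_filter, Finset.mem_filter]
  simp only [Finset.mem_filter, Finset.mem_univ, true_and, Equiv.Perm.coe_inv, Equiv.symm_apply_apply,
    Equiv.apply_symm_apply]
  tauto

-- mmp lemmas
variable (a b c d : Option ℕ)

lemma mmp_mul_rev : mmp a b c d (σ * revP n) = mmp b a d c σ := by
  unfold mmp
  rw [← card_filter_equiv (revP n)
    (p := fun i => pcond b (quad1 σ i) ∧ pcond a (quad2 σ i) ∧
      pcond d (quad3 σ i) ∧ pcond c (quad4 σ i))]
  congr 1; ext i
  rw [Finset.mem_filter, Finset.mem_filter]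
  simp only [Finset.mem_filter, Finset.mem_univ, true_and, revP_apply,
    quad1_mul_rev, quad2_mul_rev, quad3_mul_rev, quad4_mul_rev]
  tauto

lemma mmp_rev_mul : mmp a b c d (revP n * σ) = mmp d c b a σ := by
  unfold mmp
  congr 1; ext i
  rw [Finset.mem_filter, Finset.mem_filter]
  simp only [Finset.mem_filter, Finset.mem_univ, true_and,
    quad1_rev_mul, quad2_rev_mul, quad3_rev_mul, quad4_rev_mul]
  tauto

lemma mmp_inv : mmp a b c d σ⁻¹ = mmp a d c b σ := by
  unfold mmp
  rw [← card_filter_equiv σ⁻¹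
    (p := fun i => pcond a (quad1 σ i) ∧ pcond d (quad2 σ i) ∧
      pcond c (quad3 σ i) ∧ pcond b (quad4 σ i))]
  congr 1; ext i
  rw [Finset.mem_filter, Finset.mem_filter]
  simp only [Finset.mem_filter, Finset.mem_univ, true_and,
    quad1_inv, quad2_inv, quad3_inv, quad4_inv, Equiv.Perm.coe_inv, Equiv.symm_apply_apply]
  tauto

end lemmas

-- R lemmas
lemma R_rev (a b c d : Option ℕ) (n : ℕ) : R a b c d n = R b a d c n := by
  unfold R
  rw [← Equiv.sum_comp (Equiv.mulRight (revP n)) (fun σ => Polynomial.X ^ mmp a b c d σ)]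
  exact Finset.sum_congr rfl fun σ _ => by
    rw [show Equiv.mulRight (revP n) σ = σ * revP n from rfl, mmp_mul_rev]

lemma R_comp (a b c d : Option ℕ) (n : ℕ) : R a b c d n = R d c b a n := by
  unfold R
  rw [← Equiv.sum_comp (Equiv.mulLeft (revP n)) (fun σ => Polynomial.X ^ mmp a b c d σ)]
  exact Finset.sum_congr rfl fun σ _ => by
    rw [show Equiv.mulLeft (revP n) σ = revP n * σ from rfl, mmp_rev_mul]

lemma R_inv (a b c d : Option ℕ) (n : ℕ) : R a b c d n = R a d c b n := by
  unfold R
  rw [← Equiv.sum_comp (Equiv.inv (Equiv.Perm (Fin n))) (fun σ => Polynomial.X ^ mmp a b c d σ)]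
  exact Finset.sum_congr rfl fun σ _ => by
    rw [show Equiv.inv (Equiv.Perm (Fin n)) σ = σ⁻¹ from rfl, mmp_inv]

theorem stmt_0 (a b c d : Option ℕ) (n : ℕ) (hn : 1 ≤ n) :
    R a b c d n = R d a b c n ∧
    R a b c d n = R c b a d n ∧
    R a b c d n = R b a d c n ∧
    R a b c d n = R d c b a n ∧
    R a b c d n = R a d c b n ∧
    R a b c d n = R c d a b n ∧
    R a b c d n = R b c d a n := by
  refine ⟨?_, ?_, R_rev a b c d n, R_comp a b c d n, R_inv a b c d n, ?_, ?_⟩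
  · rw [R_inv a b c d n, R_rev a d c b n]
  · rw [R_inv a b c d n, R_comp a d c b n, R_rev b c d a n]
  · rw [R_comp a b c d n, R_rev d c b a n]
  · rw [R_inv a b c d n, R_comp a d c b n]
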